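/- Let Φ denote the standard normal CDF and let a, b > 0. Define T_n = ∑_{i=1}^n 1{X_i > 0} − n/2 for i.i.d. X_i ~ N(μ, σ²) with σ > 0, and B_n^{(a,b)} = B(a + n/2 + T_n, b + n/2 − T_n) / (2^{−n}·B(a,b)) where B(·,·) is the Beta function. Then (log B_n^{(a,b)})/n → log(Φ(μ/σ)^{Φ(μ/σ)} · Φ(−μ/σ)^{Φ(−μ/σ)}) + log 2 almost surely as n → ∞. -/

import Mathlib

open MeasureTheory ProbabilityTheory
open Filter Finset Real Topology

/-! ### Auxiliary analytic lemmas -/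

noncomputable def slog (c : ℝ) (m : ℕ) : ℝ := ∑ k ∈ Finset.range m, Real.log (c + k)

lemma logGamma_nat_add {c : ℝ} (hc : 0 < c) (m : ℕ) :
    Real.log (Real.Gamma (c + m)) = Real.log (Real.Gamma c) + slog c m := by
  induction m with
  | zero => simp [slog]
  | succ m ih =>
    have h1 : (0:ℝ) < c + m := by positivity
    have : c + (m+1 : ℕ) = (c + m) + 1 := by push_cast; ring
    rw [this, Real.Gamma_add_one h1.ne', Real.log_mul h1.ne'
      (Real.Gamma_pos_of_pos (by positivity)).ne', slog, Finset.sum_range_succ, ih]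
    rw [slog]; ring

lemma integral_log_shift {c : ℝ} (hc : 0 < c) (m : ℕ) :
    ∫ x in (0:ℝ)..(m:ℝ), Real.log (c + x)
      = (c+m) * Real.log (c+m) - c * Real.log c - m := by
  rw [intervalIntegral.integral_comp_add_left Real.log c]
  rw [add_zero, integral_log]
  ring

lemma slog_le {c : ℝ} (hc : 0 < c) (m : ℕ) :
    slog c m ≤ (c+m) * Real.log (c+m) - c * Real.log c - m := by
  rw [← integral_log_shift hc]
  have h := MonotoneOn.sum_le_integral (x₀ := (0:ℝ)) (a := m) (f := fun x => Real.log (c + x)) ?_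
  · simpa [slog] using h
  · intro x hx y hy hxy
    exact Real.log_le_log (by simp at hx; linarith [hx.1]) (by linarith)

lemma le_slog {c : ℝ} (hc : 0 < c) (m : ℕ) :
    (c+m) * Real.log (c+m) - c * Real.log c - m
      ≤ slog c m + Real.log (c + m) - Real.log c := by
  rw [← integral_log_shift hc]
  have h := MonotoneOn.integral_le_sum (x₀ := (0:ℝ)) (a := m) (f := fun x => Real.log (c + x)) ?_
  · have h2 : ∑ i ∈ Finset.range m, Real.log (c + ((i:ℝ) + 1)) =
        slog c m + Real.log (c + m) - Real.log c := by
      have := Finset.sum_range_succ' (fun k : ℕ => Real.log (c + k)) m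
      rw [Finset.sum_range_succ] at this
      simp only [Nat.cast_zero, add_zero, Nat.cast_add, Nat.cast_one] at this
      rw [slog]
      linarith [this]
    calc ∫ x in (0:ℝ)..(m:ℝ), Real.log (c + x) ≤ _ := by simpa using h
    _ = _ := h2
  · intro x hx y hy hxy
    exact Real.log_le_log (by simp at hx; linarith [hx.1]) (by linarith)

lemma tendsto_log_add_div (c : ℝ) (hc : 0 < c) :
    Tendsto (fun n : ℕ => Real.log (c + n) / n) atTop (𝓝 0) := by
  have h1 : Tendsto (fun n : ℕ => (c + (n:ℝ))) atTop atTop :=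
    tendsto_atTop_add_const_left _ c tendsto_natCast_atTop_atTop
  have h2 : Tendsto (fun n : ℕ => Real.log (c + n) / (c + n)) atTop (𝓝 0) :=
    (Real.isLittleO_log_id_atTop.tendsto_div_nhds_zero).comp h1
  have h3 : Tendsto (fun n : ℕ => (c + (n:ℝ)) / n) atTop (𝓝 1) := by
    have h : Tendsto (fun n : ℕ => c / n + 1) atTop (𝓝 (0 + 1)) :=
      (tendsto_const_div_atTop_nhds_zero_nat c).add tendsto_const_nhds
    rw [zero_add] at h
    apply h.congr'
    filter_upwards [eventually_ne_atTop 0] with n hn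
    have hn' : (n:ℝ) ≠ 0 := Nat.cast_ne_zero.mpr hn
    field_simp
  have h4 := h2.mul h3
  rw [zero_mul] at h4
  apply h4.congr'
  filter_upwards [eventually_ne_atTop 0] with n hn
  have hn' : (n:ℝ) ≠ 0 := Nat.cast_ne_zero.mpr hn
  have hcn : (c + (n:ℝ)) ≠ 0 := by positivity
  field_simp

lemma tendsto_log_nat_div : Tendsto (fun n : ℕ => Real.log n / n) atTop (𝓝 0) :=
  (Real.isLittleO_log_id_atTop.tendsto_div_nhds_zero).comp tendsto_natCast_atTop_atTop

lemma key {c α : ℝ} (hc : 0 < c) (hα : 0 < α) (m : ℕ → ℕ) (hm : ∀ n, m n ≤ n)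
    (hlim : Tendsto (fun n => (m n : ℝ)/n) atTop (𝓝 α)) :
    Tendsto (fun n => (slog c (m n) - (m n) * Real.log n)/n) atTop
      (𝓝 (α * Real.log α - α)) := by
  set F : ℕ → ℝ := fun n => (c + m n) * Real.log (c + m n) - c * Real.log c - m n with hF
  have hcm : ∀ n, (0:ℝ) < c + m n := fun n => by positivity
  have hmle : ∀ n, (m n : ℝ) ≤ n := fun n => Nat.cast_le.mpr (hm n)
  have hD : Tendsto (fun n => (slog c (m n) - F n)/n) atTop (𝓝 0) := by
    have hg : Tendsto (fun n : ℕ => (Real.log c - Real.log (c + n))/n) atTop (𝓝 0) := by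
      have := ((tendsto_const_div_atTop_nhds_zero_nat (Real.log c)).sub
        (tendsto_log_add_div c hc))
      rw [sub_zero] at this
      apply this.congr (fun n => by rw [sub_div])
    apply tendsto_of_tendsto_of_tendsto_of_le_of_le' hg tendsto_const_nhds
    · filter_upwards [eventually_ge_atTop 1] with n hn
      have hn0 : (0:ℝ) < n := by exact_mod_cast hn
      have h1 := le_slog hc (m n)
      have h2 : Real.log (c + m n) ≤ Real.log (c + n) := by
        apply Real.log_le_log (hcm n)
        linarith [hmle n]
      apply (div_le_div_iff_of_pos_right hn0).mpr
      simp only [hF]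
      linarith
    · filter_upwards [eventually_ge_atTop 1] with n hn
      have hn0 : (0:ℝ) < n := by exact_mod_cast hn
      have h1 := slog_le hc (m n)
      apply div_nonpos_of_nonpos_of_nonneg _ hn0.le
      simp only [hF]
      linarith
  have hu : Tendsto (fun n : ℕ => (c + m n)/n) atTop (𝓝 α) := by
    have h := (tendsto_const_div_atTop_nhds_zero_nat c).add hlim
    rw [zero_add] at h
    apply h.congr (fun n => by rw [← add_div])
  have hU : Tendsto (fun n => (F n - (m n) * Real.log n)/n) atTop (𝓝 (α * Real.log α - α)) := by
    have hlog : Tendsto (fun n : ℕ => ((c + m n)/n) * Real.log ((c + m n)/n)) atTop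
        (𝓝 (α * Real.log α)) := hu.mul (hu.log hα.ne')
    have hc2 : Tendsto (fun n : ℕ => c * (Real.log n / n)) atTop (𝓝 (c * 0)) :=
      tendsto_const_nhds.mul tendsto_log_nat_div
    have hc3 : Tendsto (fun n : ℕ => (c - c * Real.log c)/n) atTop (𝓝 0) :=
      tendsto_const_div_atTop_nhds_zero_nat _
    have hall := ((hlog.add (by rw [mul_zero] at hc2; exact hc2)).sub hu).add hc3
    rw [add_zero, add_zero] at hall
    apply hall.congr'
    filter_upwards [eventually_ge_atTop 1] with n hn
    have hn0 : (0:ℝ) < n := by exact_mod_cast hn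
    have hlogdiv : Real.log ((c + m n)/n) = Real.log (c + m n) - Real.log n :=
      Real.log_div (hcm n).ne' hn0.ne'
    rw [hlogdiv, hF]
    field_simp
    ring
  have := hD.add hU
  rw [zero_add] at this
  exact this.congr (fun n => by rw [← add_div, sub_add_sub_cancel])

lemma analytic_main {a b p : ℝ} (ha : 0 < a) (hb : 0 < b) (hp0 : 0 < p) (hp1 : p < 1)
    (s : ℕ → ℕ) (hs : ∀ n, s n ≤ n)
    (hlim : Tendsto (fun n => (s n : ℝ)/n) atTop (𝓝 p)) :
    Tendsto (fun n : ℕ => Real.log ((Real.Gamma (a + (s n : ℝ)) *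
        Real.Gamma (b + ((n - s n : ℕ) : ℝ)) / Real.Gamma (a + b + (n : ℝ))) /
        ((2:ℝ) ^ (-(n:ℝ)) * (Real.Gamma a * Real.Gamma b / Real.Gamma (a + b)))) / n)
      atTop (𝓝 (p * Real.log p + (1-p) * Real.log (1-p) + Real.log 2)) := by
  have hq0 : 0 < 1 - p := by linarith
  have k1 := key ha hp0 s hs hlim
  have hq : Tendsto (fun n : ℕ => ((n - s n : ℕ) : ℝ)/n) atTop (𝓝 (1 - p)) := by
    have h : Tendsto (fun n : ℕ => 1 - (s n:ℝ)/n) atTop (𝓝 (1 - p)) :=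
      tendsto_const_nhds.sub hlim
    apply h.congr'
    filter_upwards [eventually_ne_atTop 0] with n hn
    have hn' : (n:ℝ) ≠ 0 := Nat.cast_ne_zero.mpr hn
    rw [Nat.cast_sub (hs n)]
    field_simp
  have k2 := key hb hq0 (fun n => n - s n) (fun n => (Nat.sub_le n (s n))) hq
  have h1 : Tendsto (fun n : ℕ => ((n : ℕ) : ℝ)/n) atTop (𝓝 1) := by
    apply tendsto_const_nhds.congr'
    filter_upwards [eventually_ne_atTop 0] with n hn
    have hn' : (n:ℝ) ≠ 0 := Nat.cast_ne_zero.mpr hn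
    field_simp
  have k3 := key (by positivity : (0:ℝ) < a + b) one_pos id (fun n => le_refl n) h1
  have hlog2 : Tendsto (fun _ : ℕ => Real.log 2) atTop (𝓝 (Real.log 2)) := tendsto_const_nhds
  have hsum := ((k1.add k2).sub k3).add hlog2
  have hconst : p * Real.log p - p + ((1-p) * Real.log (1-p) - (1-p)) -
      (1 * Real.log 1 - 1) + Real.log 2
      = p * Real.log p + (1-p) * Real.log (1-p) + Real.log 2 := by
    simp [Real.log_one]; ring
  rw [hconst] at hsum
  apply hsum.congr'
  filter_upwards [eventually_ge_atTop 1] with n hn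
  have hn0 : (0:ℝ) < n := by exact_mod_cast hn
  have hΓ1 : 0 < Real.Gamma (a + (s n : ℝ)) := Real.Gamma_pos_of_pos (by positivity)
  have hΓ2 : 0 < Real.Gamma (b + ((n - s n : ℕ) : ℝ)) := Real.Gamma_pos_of_pos (by positivity)
  have hΓ3 : 0 < Real.Gamma (a + b + (n : ℝ)) := Real.Gamma_pos_of_pos (by positivity)
  have hΓa : 0 < Real.Gamma a := Real.Gamma_pos_of_pos ha
  have hΓb : 0 < Real.Gamma b := Real.Gamma_pos_of_pos hb
  have hΓab : 0 < Real.Gamma (a + b) := Real.Gamma_pos_of_pos (by positivity)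
  have h2n : (0:ℝ) < (2:ℝ) ^ (-(n:ℝ)) := Real.rpow_pos_of_pos two_pos _
  have hC : 0 < Real.Gamma a * Real.Gamma b / Real.Gamma (a + b) := by positivity
  have hlogE : Real.log ((Real.Gamma (a + (s n : ℝ)) *
        Real.Gamma (b + ((n - s n : ℕ) : ℝ)) / Real.Gamma (a + b + (n : ℝ))) /
        ((2:ℝ) ^ (-(n:ℝ)) * (Real.Gamma a * Real.Gamma b / Real.Gamma (a + b))))
      = slog a (s n) + slog b (n - s n) - slog (a+b) n + n * Real.log 2 := by
    rw [Real.log_div (by positivity) (by positivity),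
      Real.log_mul (by positivity) (by positivity),
      Real.log_div (by positivity) (by positivity),
      Real.log_mul (by positivity) (by positivity),
      Real.log_div (by positivity) (by positivity),
      Real.log_mul (by positivity) (by positivity),
      Real.log_rpow two_pos,
      logGamma_nat_add ha, logGamma_nat_add hb, logGamma_nat_add (by positivity : (0:ℝ) < a + b)]
    ring
  rw [hlogE]
  have hm2 : ((n - s n : ℕ) : ℝ) = (n:ℝ) - (s n : ℝ) := Nat.cast_sub (hs n)
  simp only [id]
  rw [hm2]
  field_simp
  ring

/-! ### Gaussian measure lemmas -/

lemma gauss_symm (c : ℝ) :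
    gaussianReal 0 1 (Set.Ioi (-c)) = gaussianReal 0 1 (Set.Iic c) := by
  have hneg : (gaussianReal 0 1).map (fun x => (-1:ℝ) * x) = gaussianReal 0 1 := by
    have := gaussianReal_map_const_mul (μ := 0) (v := 1) (-1)
    have h1 : (NNReal.mk ((-1:ℝ)^2) (sq_nonneg _)) = 1 := by
      rw [← NNReal.coe_inj]; show (-1:ℝ)^2 = 1; norm_num
    simpa [h1] using this
  have hsym : gaussianReal 0 1 (Set.Iic c) = gaussianReal 0 1 (Set.Ici (-c)) := by
    conv_lhs => rw [← hneg]
    rw [Measure.map_apply (by fun_prop) measurableSet_Iic]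
    congr 1
    ext x
    simp only [Set.mem_preimage, Set.mem_Iic, Set.mem_Ici]
    constructor <;> intro h <;> linarith
  have hsing : gaussianReal 0 1 {-c} = 0 :=
    gaussianReal_absolutelyContinuous 0 one_ne_zero (measure_singleton _)
  rw [hsym, ← Set.Ioi_union_left]
  exact le_antisymm (measure_mono Set.subset_union_left)
    ((measure_union_le _ _).trans_eq (by rw [hsing, add_zero]))

lemma gauss_Ioi (μ σ : ℝ) (hσ : 0 < σ) :
    gaussianReal μ (Real.toNNReal (σ ^ 2)) (Set.Ioi 0)
      = gaussianReal 0 1 (Set.Iic (μ / σ)) := by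
  have hv : (NNReal.mk (σ^2) (sq_nonneg σ)) = Real.toNNReal (σ^2) := by
    rw [← NNReal.coe_inj]
    show σ^2 = ((σ^2).toNNReal : ℝ)
    simp [Real.coe_toNNReal _ (sq_nonneg σ)]
  have hmap : (gaussianReal 0 1).map (fun x => σ * x + μ)
      = gaussianReal μ (Real.toNNReal (σ ^ 2)) := by
    have h1 : (gaussianReal 0 1).map (fun x => σ * x) = gaussianReal 0 (Real.toNNReal (σ^2)) := by
      have := gaussianReal_map_const_mul (μ := 0) (v := 1) σ
      simpa [hv] using this
    have h2 := gaussianReal_map_add_const (μ := 0) (v := Real.toNNReal (σ^2)) μ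
    rw [← h1] at h2
    rw [Measure.map_map (measurable_add_const μ) (measurable_const_mul σ)] at h2
    simpa [Function.comp_def] using h2
  have hpre : (fun x => σ * x + μ) ⁻¹' (Set.Ioi 0) = Set.Ioi (-(μ/σ)) := by
    ext x
    simp only [Set.mem_preimage, Set.mem_Ioi]
    rw [← neg_div, div_lt_iff₀ hσ]
    constructor <;> intro h <;> nlinarith
  rw [← hmap, Measure.map_apply (by fun_prop) measurableSet_Ioi, hpre, gauss_symm]

lemma gauss_compl (c : ℝ) :
    (gaussianReal 0 1 (Set.Iic (-c))).toReal = 1 - (gaussianReal 0 1 (Set.Iic c)).toReal := by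
  have h := measure_add_measure_compl (μ := gaussianReal 0 1) (s := Set.Iic (-c))
    measurableSet_Iic
  rw [Set.compl_Iic, measure_univ] at h
  have h2 := congrArg ENNReal.toReal h
  rw [ENNReal.toReal_add (measure_ne_top _ _) (measure_ne_top _ _), ENNReal.toReal_one] at h2
  have h3 := congrArg ENNReal.toReal (gauss_symm c)
  linarith

lemma gauss_Iic_pos (c : ℝ) : 0 < (gaussianReal 0 1 (Set.Iic c)).toReal := by
  have h1 : gaussianReal 0 1 (Set.Iic c) ≠ 0 := by
    intro h
    have := gaussianReal_absolutelyContinuous' 0 one_ne_zero h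
    rw [Real.volume_Iic] at this
    exact ENNReal.top_ne_zero this
  exact ENNReal.toReal_pos h1 (measure_ne_top _ _)

/-! ### Strong law part -/

lemma slln_aux {Ω : Type*} {mΩ : MeasurableSpace Ω} (Pr : Measure Ω) [IsProbabilityMeasure Pr]
    (μ σ : ℝ) (hσ : 0 < σ)
    (X : ℕ → Ω → ℝ) (hXm : ∀ i, Measurable (X i))
    (hiid : iIndepFun X Pr)
    (hlaw : ∀ i, Pr.map (X i) = gaussianReal μ (Real.toNNReal (σ ^ 2))) :
    ∀ᵐ ω ∂Pr, Tendsto (fun n : ℕ =>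
        (∑ i ∈ Finset.range n, if 0 < X i ω then (1:ℝ) else 0) / n) atTop
      (𝓝 (gaussianReal 0 1 (Set.Iic (μ / σ))).toReal) := by
  set f : ℝ → ℝ := fun x => if 0 < x then 1 else 0 with hfdef
  have hf : Measurable f := Measurable.ite measurableSet_Ioi measurable_const measurable_const
  set Y : ℕ → Ω → ℝ := fun i => f ∘ X i with hYdef
  have hindep : Pairwise (Function.onFun (IndepFun · · Pr) Y) := fun i j hij =>
    (hiid.comp (fun _ => f) (fun _ => hf)).indepFun hij
  have hident : ∀ i, IdentDistrib (Y i) (Y 0) Pr Pr := fun i =>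
    ⟨(hf.comp (hXm i)).aemeasurable, (hf.comp (hXm 0)).aemeasurable, by
      rw [hYdef]
      rw [← Measure.map_map hf (hXm i), ← Measure.map_map hf (hXm 0), hlaw i, hlaw 0]⟩
  have hY0 : Y 0 = (X 0 ⁻¹' Set.Ioi 0).indicator (fun _ => (1:ℝ)) := by
    funext ω
    by_cases h : 0 < X 0 ω <;>
      simp [hYdef, hfdef, Set.indicator_apply, Set.mem_preimage, Set.mem_Ioi, h]
  have hint : Integrable (Y 0) Pr := by
    rw [hY0]; exact (integrable_const 1).indicator ((hXm 0) measurableSet_Ioi)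
  have hexp : ∫ ω, Y 0 ω ∂Pr = (gaussianReal 0 1 (Set.Iic (μ / σ))).toReal := by
    rw [hY0, integral_indicator_const (1:ℝ) ((hXm 0) measurableSet_Ioi), smul_eq_mul, mul_one,
      measureReal_def, ← Measure.map_apply (hXm 0) measurableSet_Ioi, hlaw 0, gauss_Ioi μ σ hσ]
  have h := strong_law_ae_real Y hint hindep hident
  rw [hexp] at h
  filter_upwards [h] with ω hω
  exact hω

/-- E-power of the beta-binomial mixture test supermartingale for the median: with
`Φ` the standard normal CDF, `T_n = ∑ 1{Xᵢ>0} − n/2` for i.i.d. `Xᵢ ~ N(μ,σ²)`, and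
`B_n^{(a,b)} = B(a+n/2+T_n, b+n/2−T_n)/(2^{−n} B(a,b))` (with `B` the Beta function,
expressed via Gamma functions), one has
`(log B_n^{(a,b)})/n → log(Φ(μ/σ)^{Φ(μ/σ)} Φ(−μ/σ)^{Φ(−μ/σ)}) + log 2` a.s. -/
theorem stmt_19 {Ω : Type*} {mΩ : MeasurableSpace Ω} (Pr : Measure Ω) [IsProbabilityMeasure Pr]
    (μ σ : ℝ) (hσ : 0 < σ)
    (X : ℕ → Ω → ℝ) (hXm : ∀ i, Measurable (X i))
    (hiid : iIndepFun X Pr)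
    (hlaw : ∀ i, Pr.map (X i) = gaussianReal μ (Real.toNNReal (σ ^ 2)))
    (a b : ℝ) (ha : 0 < a) (hb : 0 < b) :
    ∀ᵐ ω ∂Pr, Filter.Tendsto (fun n : ℕ =>
        Real.log (
          (Real.Gamma (a + (n : ℝ) / 2 +
                ((∑ i ∈ Finset.range n, if 0 < X i ω then (1 : ℝ) else 0) - (n : ℝ) / 2)) *
              Real.Gamma (b + (n : ℝ) / 2 -
                ((∑ i ∈ Finset.range n, if 0 < X i ω then (1 : ℝ) else 0) - (n : ℝ) / 2)) /
              Real.Gamma (a + b + (n : ℝ))) /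
            ((2 : ℝ) ^ (-(n : ℝ)) * (Real.Gamma a * Real.Gamma b / Real.Gamma (a + b)))) / n)
      Filter.atTop (nhds (Real.log
        (((gaussianReal 0 1 (Set.Iic (μ / σ))).toReal ^
            (gaussianReal 0 1 (Set.Iic (μ / σ))).toReal) *
          ((gaussianReal 0 1 (Set.Iic (-(μ / σ)))).toReal ^
            (gaussianReal 0 1 (Set.Iic (-(μ / σ)))).toReal)) + Real.log 2)) := by
  set p : ℝ := (gaussianReal 0 1 (Set.Iic (μ / σ))).toReal with hpdef
  have hp0 : 0 < p := gauss_Iic_pos _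
  have hqeq : (gaussianReal 0 1 (Set.Iic (-(μ / σ)))).toReal = 1 - p := gauss_compl (μ / σ)
  have hq0 : 0 < 1 - p := by
    rw [← hqeq]; exact gauss_Iic_pos _
  have hp1 : p < 1 := by linarith
  filter_upwards [slln_aux Pr μ σ hσ X hXm hiid hlaw] with ω hω
  rw [hqeq]
  have hval : Real.log (p ^ p * (1-p) ^ (1-p)) + Real.log 2
      = p * Real.log p + (1-p) * Real.log (1-p) + Real.log 2 := by
    rw [Real.log_mul (Real.rpow_pos_of_pos hp0 p).ne' (Real.rpow_pos_of_pos hq0 _).ne',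
      Real.log_rpow hp0, Real.log_rpow hq0]
  rw [hval]
  set s : ℕ → ℕ := fun n => ((Finset.range n).filter (fun i => 0 < X i ω)).card with hsdef
  have hsum : ∀ n, (∑ i ∈ Finset.range n, if 0 < X i ω then (1:ℝ) else 0) = (s n : ℝ) :=
    fun n => Finset.sum_boole _ _
  have hs : ∀ n, s n ≤ n := fun n =>
    (Finset.card_filter_le _ _).trans (le_of_eq (Finset.card_range n))
  have hlim : Tendsto (fun n => (s n : ℝ)/n) atTop (𝓝 p) :=
    hω.congr (fun n => by rw [hsum n])
  have H := analytic_main ha hb hp0 hp1 s hs hlim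
  apply H.congr
  intro n
  have e1 : a + (s n : ℝ) = a + (n:ℝ)/2 + ((s n : ℝ) - (n:ℝ)/2) := by ring
  have e2 : b + ((n - s n : ℕ) : ℝ) = b + (n:ℝ)/2 - ((s n : ℝ) - (n:ℝ)/2) := by
    rw [Nat.cast_sub (hs n)]; ring
  rw [hsum n, ← e1, ← e2]
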